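/- The sequence (β(n))_{n ≥ 1} is strictly decreasing and converges to 1 as n → ∞. -/

import Mathlib

/-- One step of the recursion for the ice-model boundary counts
`(pa, pb, pc, pd)` on the Sierpinski gasket `SG(n)`. -/
def iceStep : ℕ × ℕ × ℕ × ℕ → ℕ × ℕ × ℕ × ℕ
  | (a, b, c, d) =>
    ((a + b) ^ 2 * (a + 3 * c + d),
     (a + b) ^ 2 * (b + 3 * c + d),
     a ^ 2 * b + b ^ 2 * a + (3 * c + d) ^ 3,
     a ^ 3 + b ^ 3 + (3 * c + d) ^ 3)

/-- The quadruple `(pa(n), pb(n), pc(n), pd(n))`. -/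
def iceSeq : ℕ → ℕ × ℕ × ℕ × ℕ
  | 0 => (0, 1, 0, 1)
  | n + 1 => iceStep (iceSeq n)

def pa (n : ℕ) : ℕ := (iceSeq n).1
def pb (n : ℕ) : ℕ := (iceSeq n).2.1
def pc (n : ℕ) : ℕ := (iceSeq n).2.2.1
def pd (n : ℕ) : ℕ := (iceSeq n).2.2.2

noncomputable def alphaSeq (n : ℕ) : ℝ := (pa n : ℝ) / (pb n : ℝ)
noncomputable def betaSeq (n : ℕ) : ℝ := (pd n : ℝ) / (pc n : ℝ)
noncomputable def gammaSeq (n : ℕ) : ℝ := (pb n : ℝ) / (pc n : ℝ)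

lemma pa_succ (n : ℕ) : pa (n+1) = (pa n + pb n) ^ 2 * (pa n + 3 * pc n + pd n) := rfl
lemma pb_succ (n : ℕ) : pb (n+1) = (pa n + pb n) ^ 2 * (pb n + 3 * pc n + pd n) := rfl
lemma pc_succ (n : ℕ) : pc (n+1) = pa n ^ 2 * pb n + pb n ^ 2 * pa n + (3 * pc n + pd n) ^ 3 := rfl
lemma pd_succ (n : ℕ) : pd (n+1) = pa n ^ 3 + pb n ^ 3 + (3 * pc n + pd n) ^ 3 := rfl

lemma step_basics {a b c d : ℕ} (h1 : 1 ≤ a) (h2 : a < b) (h3 : 1 ≤ c) (h4 : c < d) :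
    1 ≤ (a + b) ^ 2 * (a + 3 * c + d) ∧
    (a + b) ^ 2 * (a + 3 * c + d) < (a + b) ^ 2 * (b + 3 * c + d) ∧
    1 ≤ a ^ 2 * b + b ^ 2 * a + (3 * c + d) ^ 3 ∧
    a ^ 2 * b + b ^ 2 * a + (3 * c + d) ^ 3 < a ^ 3 + b ^ 3 + (3 * c + d) ^ 3 := by
  refine ⟨show 0 < _ by positivity, ?_, show 0 < _ by positivity, ?_⟩
  · exact Nat.mul_lt_mul_of_le_of_lt (le_refl _) (by omega) (by positivity)
  · have : a ^ 2 * b + b ^ 2 * a < a ^ 3 + b ^ 3 := by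
      zify; nlinarith [sq_nonneg ((b : ℤ) - a), h1, h2]
    omega

lemma basics : ∀ n, 1 ≤ pa (n+1) ∧ pa (n+1) < pb (n+1) ∧ 1 ≤ pc (n+1) ∧ pc (n+1) < pd (n+1) := by
  intro n
  induction n with
  | zero => decide
  | succ n ih =>
    obtain ⟨h1, h2, h3, h4⟩ := ih
    rw [pa_succ (n+1), pb_succ (n+1), pc_succ (n+1), pd_succ (n+1)]
    exact step_basics h1 h2 h3 h4

lemma Jinv : ∀ n, 2 ≤ n → 2 * (pa n + pb n) ≤ 3 * pc n + pd n := by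
  intro n hn
  induction n, hn using Nat.le_induction with
  | base => decide
  | succ n hn ih =>
    obtain ⟨h1, h2, h3, h4⟩ := basics (n - 1)
    have hn1 : n - 1 + 1 = n := by omega
    rw [hn1] at h1 h2 h3 h4
    rw [pa_succ n, pb_succ n, pc_succ n, pd_succ n]
    set a := pa n; set b := pb n; set c := pc n; set d := pd n
    zify at *
    nlinarith [ih, h1, h2, h3, h4, sq_nonneg ((a:ℤ) + b), mul_pos (show (0:ℤ) < a + b by positivity) (show (0:ℤ) < 3*c+d by positivity), mul_le_mul ih ih (by positivity) (by positivity)]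

lemma step_I {a b c d : ℤ} (h1 : 1 ≤ a) (h2 : a < b) (h3 : 1 ≤ c) (h4 : c < d)
    (hJ : 2 * (a + b) ≤ 3 * c + d) :
    ((a+b)^2*(b+3*c+d) - (a+b)^2*(a+3*c+d))^2 * ((a+b)^2*(a+3*c+d) + (a+b)^2*(b+3*c+d))
      ≤ ((a^3+b^3+(3*c+d)^3) - (a^2*b+b^2*a+(3*c+d)^3)) * (a^2*b+b^2*a+(3*c+d)^3)^2 := by
  set s : ℤ := 3*c+d with hs
  set t : ℤ := a+b with ht
  set e : ℤ := b-a with he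
  have hts : 2*t ≤ s := hJ
  have ht1 : 1 ≤ t := by omega
  have hs1 : 1 ≤ s := by omega
  have key : t^5 * (t + 2*s) ≤ s^6 := by
    have h5 : (2*t)^5 ≤ s^5 := pow_le_pow_left₀ (by positivity) hts 5
    have h5' : 32 * t^5 ≤ s^5 := by linarith [h5, show (2*t)^5 = 32 * t^5 from by ring]
    nlinarith [mul_le_mul_of_nonneg_left h5' (show (0:ℤ) ≤ t by omega),
      mul_le_mul_of_nonneg_left h5' (show (0:ℤ) ≤ 2*s by omega),
      mul_le_mul_of_nonneg_right hts (show (0:ℤ) ≤ t^5 by positivity),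
      pow_le_pow_left₀ (show (0:ℤ) ≤ t by omega) (show t ≤ s by omega) 5]
  have hc' : s^3 ≤ a^2*b+b^2*a+s^3 := by nlinarith
  have hs3 : (0:ℤ) ≤ s^3 := by positivity
  have hsq : s^6 ≤ (a^2*b+b^2*a+s^3)^2 := by
    calc s^6 = s^3 * s^3 := by ring
    _ ≤ (a^2*b+b^2*a+s^3) * (a^2*b+b^2*a+s^3) := by
        exact mul_le_mul hc' hc' hs3 (by linarith)
    _ = (a^2*b+b^2*a+s^3)^2 := by ring
  have hLHS : ((a+b)^2*(b+3*c+d) - (a+b)^2*(a+3*c+d))^2 * ((a+b)^2*(a+3*c+d) + (a+b)^2*(b+3*c+d))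
      = (t * e^2) * (t^5 * (t + 2*s)) := by rw [ht, he, hs]; ring
  have hRHS : ((a^3+b^3+(3*c+d)^3) - (a^2*b+b^2*a+(3*c+d)^3)) * (a^2*b+b^2*a+(3*c+d)^3)^2
      = (t * e^2) * (a^2*b+b^2*a+s^3)^2 := by rw [ht, he, hs]; ring
  rw [hLHS, hRHS]
  have hte : (0:ℤ) ≤ t * e^2 := by positivity
  exact mul_le_mul_of_nonneg_left (key.trans hsq) hte

lemma Iinv : ∀ n, 2 ≤ n →
    ((pb n : ℤ) - pa n)^2 * (pa n + pb n) ≤ ((pd n : ℤ) - pc n) * (pc n)^2 := by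
  intro n hn
  induction n, hn using Nat.le_induction with
  | base =>
    have e1 : pa 2 = 54 := rfl
    have e2 : pb 2 = 63 := rfl
    have e3 : pc 2 = 131 := rfl
    have e4 : pd 2 = 134 := rfl
    rw [e1, e2, e3, e4]; norm_num
  | succ n hn _ =>
    obtain ⟨h1, h2, h3, h4⟩ := basics (n - 1)
    have hn1 : n - 1 + 1 = n := by omega
    rw [hn1] at h1 h2 h3 h4
    have hJ := Jinv n hn
    rw [pa_succ n, pb_succ n, pc_succ n, pd_succ n]
    push_cast
    exact step_I (by exact_mod_cast h1) (by exact_mod_cast h2) (by exact_mod_cast h3)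
      (by exact_mod_cast h4) (by exact_mod_cast hJ)

lemma diff_succ (n : ℕ) :
    (pd (n+1) : ℤ) - pc (n+1) = ((pa n : ℤ) + pb n) * ((pb n : ℤ) - pa n)^2 := by
  rw [pd_succ n, pc_succ n]; push_cast; ring

lemma pc_pos (n : ℕ) (hn : 1 ≤ n) : 0 < pc n := by
  obtain ⟨m, rfl⟩ := Nat.exists_eq_add_of_le hn
  have := (basics (1 + m - 1)).2.2.1
  rwa [show 1 + m - 1 + 1 = 1 + m by omega] at this

lemma pc_lt_pd (n : ℕ) (hn : 1 ≤ n) : pc n < pd n := by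
  obtain ⟨m, rfl⟩ := Nat.exists_eq_add_of_le hn
  have := (basics (1 + m - 1)).2.2.2
  rwa [show 1 + m - 1 + 1 = 1 + m by omega] at this

lemma pc_succ_lb (n : ℕ) : ((3 * pc n + pd n : ℕ) : ℤ)^3 ≤ (pc (n+1) : ℤ) := by
  rw [pc_succ n]; push_cast; nlinarith [mul_nonneg (mul_nonneg (show (0:ℤ) ≤ (pa n : ℤ) by positivity) (show (0:ℤ) ≤ (pa n : ℤ) by positivity)) (show (0:ℤ) ≤ (pb n : ℤ) by positivity), mul_nonneg (mul_nonneg (show (0:ℤ) ≤ (pb n : ℤ) by positivity) (show (0:ℤ) ≤ (pb n : ℤ) by positivity)) (show (0:ℤ) ≤ (pa n : ℤ) by positivity)]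

lemma dec_int (n : ℕ) (hn : 2 ≤ n) : (pd (n+1) : ℤ) * pc n < (pd n : ℤ) * pc (n+1) := by
  obtain ⟨h1, h2, h3, h4⟩ := basics (n - 1)
  have hn1 : n - 1 + 1 = n := by omega
  rw [hn1] at h1 h2 h3 h4
  have hI := Iinv n hn
  have hd := diff_succ n
  have ha : 1 ≤ (pa n : ℤ) := by exact_mod_cast h1
  have hab : (pa n : ℤ) < pb n := by exact_mod_cast h2
  have hc : 1 ≤ (pc n : ℤ) := by exact_mod_cast h3
  have hcd : (pc n : ℤ) < pd n := by exact_mod_cast h4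
  set a := (pa n : ℤ); set b := (pb n : ℤ); set c := (pc n : ℤ); set d := (pd n : ℤ)
  -- goal: pd(n+1)*c < d * pc(n+1); equivalently (pd(n+1)-pc(n+1))*c < (d-c)*pc(n+1) + c*(pc(n+1)) ...
  have key : ((pd (n+1) : ℤ) - pc (n+1)) * c < (d - c) * pc (n+1) := by
    rw [hd]
    have hs : (c:ℤ)^3 < ((3 * pc n + pd n : ℕ) : ℤ)^3 := by
      have : c < ((3 * pc n + pd n : ℕ) : ℤ) := by push_cast; omega
      exact pow_lt_pow_left₀ this (by positivity) (by norm_num)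
    have h5 := pc_succ_lb n
    calc (a + b) * (b - a)^2 * c = ((b - a)^2 * (a + b)) * c := by ring
      _ ≤ ((d - c) * c^2) * c := by
          exact mul_le_mul_of_nonneg_right hI (by linarith)
      _ = (d - c) * c^3 := by ring
      _ < (d - c) * pc (n+1) := by
          apply mul_lt_mul_of_pos_left _ (by linarith)
          exact hs.trans_le h5
  have hcpos : (0:ℤ) < c := by linarith
  nlinarith [mul_pos hcpos (show (0:ℤ) < (pc (n+1) : ℤ) by exact_mod_cast pc_pos (n+1) (by omega))]

lemma half_int (n : ℕ) (hn : 2 ≤ n) :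
    2 * (pc n : ℤ) * ((pd (n+1) : ℤ) - pc (n+1)) ≤ (pc (n+1) : ℤ) * ((pd n : ℤ) - pc n) := by
  obtain ⟨h1, h2, h3, h4⟩ := basics (n - 1)
  have hn1 : n - 1 + 1 = n := by omega
  rw [hn1] at h1 h2 h3 h4
  have hI := Iinv n hn
  have hd := diff_succ n
  have ha : 1 ≤ (pa n : ℤ) := by exact_mod_cast h1
  have hc : 1 ≤ (pc n : ℤ) := by exact_mod_cast h3
  have hcd : (pc n : ℤ) < pd n := by exact_mod_cast h4
  set a := (pa n : ℤ); set b := (pb n : ℤ); set c := (pc n : ℤ); set d := (pd n : ℤ)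
  rw [hd]
  have hs : 2 * (c:ℤ)^3 ≤ ((3 * pc n + pd n : ℕ) : ℤ)^3 := by
    have h27 : (3*c)^3 ≤ ((3 * pc n + pd n : ℕ) : ℤ)^3 := by
      apply pow_le_pow_left₀ (by linarith) (by push_cast; omega)
    nlinarith [pow_pos (show (0:ℤ) < c by linarith) 3]
  have h5 := pc_succ_lb n
  calc 2 * c * ((a + b) * (b - a)^2) = 2 * (((b-a)^2 * (a+b)) * c) := by ring
    _ ≤ 2 * (((d - c) * c^2) * c) := by
        have := mul_le_mul_of_nonneg_right hI (show (0:ℤ) ≤ c by linarith)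
        linarith
    _ = (2 * c^3) * (d - c) := by ring
    _ ≤ (pc (n+1) : ℤ) * (d - c) := by
        exact mul_le_mul_of_nonneg_right (hs.trans h5) (by linarith)
    _ = (pc (n+1) : ℤ) * (d - c) := rfl

lemma beta_sub_one (n : ℕ) (hn : 1 ≤ n) :
    betaSeq n - 1 = ((pd n : ℝ) - pc n) / pc n := by
  have hc : (0:ℝ) < pc n := by exact_mod_cast pc_pos n hn
  rw [betaSeq, div_sub_one hc.ne']

lemma one_le_beta (n : ℕ) (hn : 1 ≤ n) : 1 ≤ betaSeq n := by
  have hc : (0:ℝ) < pc n := by exact_mod_cast pc_pos n hn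
  have hd : (pc n : ℝ) ≤ pd n := by exact_mod_cast (pc_lt_pd n hn).le
  rw [betaSeq, le_div_iff₀ hc]; linarith

lemma beta_dec (n : ℕ) (hn : 1 ≤ n) : betaSeq (n + 1) < betaSeq n := by
  rcases eq_or_lt_of_le hn with h | h
  · have e2 : pc 2 = 131 := rfl
    have e2' : pd 2 = 134 := rfl
    have e1 : pc 1 = 1 := rfl
    have e1' : pd 1 = 2 := rfl
    rw [← h]
    show betaSeq 2 < betaSeq 1
    rw [betaSeq, betaSeq, e1, e1', e2, e2']
    norm_num
  · have hn2 : 2 ≤ n := h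
    have hc1 : (0:ℝ) < pc n := by exact_mod_cast pc_pos n hn
    have hc2 : (0:ℝ) < pc (n+1) := by exact_mod_cast pc_pos (n+1) (by omega)
    rw [betaSeq, betaSeq, div_lt_div_iff₀ hc2 hc1]
    exact_mod_cast dec_int n hn2

lemma beta_half (n : ℕ) (hn : 2 ≤ n) :
    betaSeq (n + 1) - 1 ≤ (betaSeq n - 1) / 2 := by
  have hc1 : (0:ℝ) < pc n := by exact_mod_cast pc_pos n (by omega)
  have hc2 : (0:ℝ) < pc (n+1) := by exact_mod_cast pc_pos (n+1) (by omega)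
  rw [beta_sub_one n (by omega), beta_sub_one (n+1) (by omega), div_div]
  rw [div_le_div_iff₀ hc2 (by positivity)]
  have := half_int n hn
  have h' : 2 * (pc n : ℝ) * ((pd (n+1) : ℝ) - pc (n+1)) ≤ (pc (n+1) : ℝ) * ((pd n : ℝ) - pc n) := by
    exact_mod_cast this
  linarith

lemma beta_bound : ∀ k : ℕ, betaSeq (k + 2) - 1 ≤ (1/2 : ℝ)^k := by
  have hb2 : betaSeq 2 - 1 ≤ 1 := by
    have e2 : pc 2 = 131 := rfl
    have e2' : pd 2 = 134 := rfl
    rw [betaSeq, e2, e2']; norm_num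
  intro k
  induction k with
  | zero => simpa using hb2
  | succ k ih =>
    have := beta_half (k + 2) (by omega)
    calc betaSeq (k + 1 + 2) - 1 = betaSeq (k + 2 + 1) - 1 := by ring_nf
      _ ≤ (betaSeq (k + 2) - 1) / 2 := this
      _ ≤ (1/2 : ℝ)^k / 2 := by linarith
      _ = (1/2 : ℝ)^(k+1) := by ring

theorem stmt_6 :
    (∀ n : ℕ, 1 ≤ n → betaSeq (n + 1) < betaSeq n) ∧
    Filter.Tendsto betaSeq Filter.atTop (nhds 1) := by
  refine ⟨beta_dec, ?_⟩
  rw [← Filter.tendsto_add_atTop_iff_nat 2]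
  apply tendsto_of_tendsto_of_tendsto_of_le_of_le'
    (g := fun _ : ℕ => (1:ℝ)) (h := fun k : ℕ => 1 + (1/2 : ℝ)^k)
  · exact tendsto_const_nhds
  · have : Filter.Tendsto (fun k : ℕ => (1/2 : ℝ)^k) Filter.atTop (nhds 0) :=
      tendsto_pow_atTop_nhds_zero_of_lt_one (by norm_num) (by norm_num)
    simpa using tendsto_const_nhds.add this
  · exact Filter.Eventually.of_forall fun k => one_le_beta (k + 2) (by omega)
  · exact Filter.Eventually.of_forall fun k => by linarith [beta_bound k]
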